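/- arXiv:2110.13896 — 2 statements merged into one kernel-verified Lean document; each statement's English description precedes it below -/
import Mathlib

section
/- Define Γ : ℍ \ {i} → ℝ/2πℤ by: Γ(x+iy) = 0 if x=0, y>1; Γ = π if x=0, y<1; Γ = 3π/2 if x²+y²=1, x>0; Γ = π/2 if x²+y²=1, x<0; Γ = π - arctan(2x/(x²+y²-1)) if x²+y²<1; Γ = -arctan(2x/(x²+y²-1)) if x²+y²>1. Then for every x+iy ∈ ℍ with x+iy ≠ i, exp(i·Γ(x+iy)) = (x²+y²-1 - i·2x)/√(4x² + (x²+y²-1)²). -/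
open Real

/-- The angle function `Γ` at the point `i`, as a real-valued representative of the
circle-valued function `Γ : ℍ \ {i} → ℝ/2πℤ` of the paper, written in the coordinates
`x + iy`. -/
noncomputable def Gamma (x y : ℝ) : ℝ :=
  if x = 0 ∧ 1 < y then 0
  else if x = 0 ∧ y < 1 then π
  else if x ^ 2 + y ^ 2 = 1 ∧ 0 < x then 3 * π / 2
  else if x ^ 2 + y ^ 2 = 1 ∧ x < 0 then π / 2
  else if x ^ 2 + y ^ 2 < 1 then π - Real.arctan (2 * x / (x ^ 2 + y ^ 2 - 1))
  else -Real.arctan (2 * x / (x ^ 2 + y ^ 2 - 1))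

lemma sqrt_aux (A B : ℝ) (hA : A ≠ 0) :
    Real.sqrt (B ^ 2 + A ^ 2) = |A| * Real.sqrt (1 + (B / A) ^ 2) := by
  rw [← Real.sqrt_sq_eq_abs, ← Real.sqrt_mul (sq_nonneg A)]
  congr 1
  field_simp
  ring

lemma exp_aux (θ : ℝ) :
    Complex.exp ((θ : ℂ) * Complex.I) = (Real.cos θ : ℂ) + (Real.sin θ : ℂ) * Complex.I := by
  rw [Complex.exp_mul_I, Complex.ofReal_cos, Complex.ofReal_sin]

/-- For every `x + iy` in the upper half-plane with `x + iy ≠ i`,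
`exp(i·Γ(x+iy)) = (x²+y²-1 - i·2x)/√(4x² + (x²+y²-1)²)`. -/
theorem exp_I_Gamma (x y : ℝ) (hy : 0 < y) (h : (x, y) ≠ (0, 1)) :
    Complex.exp ((Gamma x y : ℂ) * Complex.I) =
      (((x ^ 2 + y ^ 2 - 1 : ℝ) : ℂ) - 2 * (x : ℂ) * Complex.I) /
        ((Real.sqrt (4 * x ^ 2 + (x ^ 2 + y ^ 2 - 1) ^ 2) : ℝ) : ℂ) := by
  have h4 : ∀ a : ℝ, 4 * a ^ 2 + (a ^ 2 + y ^ 2 - 1) ^ 2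
      = (2 * a) ^ 2 + (a ^ 2 + y ^ 2 - 1) ^ 2 := by intro a; ring
  unfold _root_.Gamma
  split_ifs with h1 h2 h3 h5 h6
  · -- x = 0, 1 < y
    obtain ⟨hx, hy1⟩ := h1
    subst hx
    have hA : (0 : ℝ) < y ^ 2 - 1 := by nlinarith
    rw [show (4 * (0:ℝ) ^ 2 + (0 ^ 2 + y ^ 2 - 1) ^ 2) = (y ^ 2 - 1) ^ 2 by ring,
      Real.sqrt_sq hA.le]
    simp only [Complex.ofReal_zero, zero_mul, Complex.exp_zero]
    rw [eq_div_iff (by exact_mod_cast hA.ne')]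
    push_cast
    ring
  · -- x = 0, y < 1
    obtain ⟨hx, hy1⟩ := h2
    subst hx
    have hA : (0:ℝ) < 1 - y ^ 2 := by nlinarith
    rw [show (4 * (0:ℝ) ^ 2 + (0 ^ 2 + y ^ 2 - 1) ^ 2) = (1 - y ^ 2) ^ 2 by ring,
      Real.sqrt_sq hA.le]
    rw [exp_aux]
    simp only [Real.cos_pi, Real.sin_pi]
    rw [eq_div_iff (by exact_mod_cast hA.ne')]
    push_cast
    ring
  · -- x²+y²=1, 0 < x
    obtain ⟨hc, hx⟩ := h3
    have hA : x ^ 2 + y ^ 2 - 1 = 0 := by linarith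
    rw [hA]
    rw [show (4 * x ^ 2 + (0:ℝ) ^ 2) = (2 * x) ^ 2 by ring, Real.sqrt_sq (by linarith)]
    rw [exp_aux]
    rw [show (3 * π / 2) = π + π / 2 by ring]
    simp only [Real.cos_pi_div_two, Real.sin_pi_div_two, Real.cos_add, Real.sin_add,
      Real.cos_pi, Real.sin_pi]
    push_cast
    rw [eq_div_iff (by exact mul_ne_zero two_ne_zero (Complex.ofReal_ne_zero.mpr hx.ne'))]
    ring_nf
    try simp [Complex.I_sq]
    try ring
  · -- x²+y²=1, x < 0
    obtain ⟨hc, hx⟩ := h5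
    have hA : x ^ 2 + y ^ 2 - 1 = 0 := by linarith
    rw [hA]
    rw [show (4 * x ^ 2 + (0:ℝ) ^ 2) = (-(2 * x)) ^ 2 by ring, Real.sqrt_sq (by linarith)]
    rw [exp_aux]
    simp only [Real.cos_pi_div_two, Real.sin_pi_div_two]
    push_cast
    rw [eq_div_iff (by exact neg_ne_zero.mpr (mul_ne_zero two_ne_zero (Complex.ofReal_ne_zero.mpr hx.ne)))]
    ring_nf
    try simp [Complex.I_sq]
    try ring
  · -- x²+y² < 1
    set A := x ^ 2 + y ^ 2 - 1 with hAdef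
    have hAneg : A < 0 := by simp [hAdef]; linarith
    set u := 2 * x / A with hu
    set s := Real.sqrt (1 + u ^ 2) with hs
    have hspos : 0 < s := Real.sqrt_pos.mpr (by positivity)
    have hD : Real.sqrt (4 * x ^ 2 + A ^ 2) = -A * s := by
      rw [show 4 * x ^ 2 + A ^ 2 = (2 * x) ^ 2 + A ^ 2 by ring,
        sqrt_aux A (2 * x) hAneg.ne, abs_of_neg hAneg]
    rw [hD, exp_aux]
    rw [Real.cos_pi_sub, Real.sin_pi_sub, Real.cos_arctan, Real.sin_arctan]
    have hDne : ((-A * s : ℝ) : ℂ) ≠ 0 := by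
      exact_mod_cast (mul_pos (by linarith) hspos).ne'
    rw [eq_div_iff hDne]
    have hs2 : s * s = 1 + u ^ 2 := Real.mul_self_sqrt (by positivity)
    have hAu : A * u = 2 * x := by
      rw [hu, mul_comm A]
      exact div_mul_cancel₀ _ hAneg.ne
    push_cast
    rw [Complex.ext_iff]
    constructor
    · simp [Complex.add_re, Complex.mul_re, Complex.sub_re, Complex.I_re, Complex.I_im]
      field_simp
      try nlinarith [hs2, hAu]
    · simp [Complex.add_im, Complex.mul_im, Complex.sub_im, Complex.I_re, Complex.I_im]
      field_simp
      try nlinarith [hs2, hAu]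
  · -- x²+y² > 1
    set A := x ^ 2 + y ^ 2 - 1 with hAdef
    have hApos : 0 < A := by
      rcases lt_or_eq_of_le (not_lt.mp h6) with h' | h'
      · simp [hAdef]; linarith
      · exfalso
        by_cases hx0 : x = 0
        · subst hx0
          rcases lt_trichotomy y 1 with hlt | heq | hgt
          · exact h2 ⟨rfl, hlt⟩
          · exact h (by rw [heq])
          · exact h1 ⟨rfl, hgt⟩
        · rcases lt_trichotomy x 0 with hlt | heq | hgt
          · exact h5 ⟨h'.symm, hlt⟩
          · exact hx0 heq
          · exact h3 ⟨h'.symm, hgt⟩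
    set u := 2 * x / A with hu
    set s := Real.sqrt (1 + u ^ 2) with hs
    have hspos : 0 < s := Real.sqrt_pos.mpr (by positivity)
    have hD : Real.sqrt (4 * x ^ 2 + A ^ 2) = A * s := by
      rw [show 4 * x ^ 2 + A ^ 2 = (2 * x) ^ 2 + A ^ 2 by ring,
        sqrt_aux A (2 * x) hApos.ne', abs_of_pos hApos]
    rw [hD, exp_aux]
    rw [Real.cos_neg, Real.sin_neg, Real.cos_arctan, Real.sin_arctan]
    have hDne : ((A * s : ℝ) : ℂ) ≠ 0 := by
      exact_mod_cast (mul_pos hApos hspos).ne'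
    rw [eq_div_iff hDne]
    have hs2 : s * s = 1 + u ^ 2 := Real.mul_self_sqrt (by positivity)
    have hAu : A * u = 2 * x := by
      rw [hu, mul_comm A]
      exact div_mul_cancel₀ _ hApos.ne'
    push_cast
    rw [Complex.ext_iff]
    constructor
    · simp [Complex.add_re, Complex.mul_re, Complex.sub_re, Complex.I_re, Complex.I_im]
      field_simp
      try nlinarith [hs2, hAu]
    · simp [Complex.add_im, Complex.mul_im, Complex.sub_im, Complex.I_re, Complex.I_im]
      field_simp
      try nlinarith [hs2, hAu]
end

section
/- The function Γ : ℍ \ {i} → ℝ/2πℤ (defined case-wise as in the previous statement) is continuously differentiable; in particular its partial derivatives on the open regions {x²+y²<1} and {x²+y²>1} are ∂Γ/∂x = 2(x²-y²+1)/(4x²+(x²+y²-1)²) and ∂Γ/∂y = 4xy/(4x²+(x²+y²-1)²), and these expressions extend continuously to ℍ \ {i}. -/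
open Real

def Dd (x y : ℝ) : ℝ := 4 * x ^ 2 + (x ^ 2 + y ^ 2 - 1) ^ 2

lemma Dd_pos {x y : ℝ} (hy : 0 < y) (h : ¬(x = 0 ∧ y = 1)) : 0 < Dd x y := by
  rcases eq_or_ne x 0 with hx | hx
  · subst hx
    have hy1 : y ≠ 1 := fun h1 => h ⟨rfl, h1⟩
    have h0 : y ^ 2 - 1 ≠ 0 := by
      intro h0; exact hy1 (by nlinarith)
    have : (y ^ 2 - 1) ^ 2 > 0 := by positivity
    simp only [Dd]; nlinarith
  · have : x ^ 2 > 0 := by positivity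
    simp only [Dd]; nlinarith [sq_nonneg (x ^ 2 + y ^ 2 - 1)]

lemma cos_sin_Gamma {x y : ℝ} (hy : 0 < y) (h : ¬(x = 0 ∧ y = 1)) :
    Real.cos (_root_.Gamma x y) = (x ^ 2 + y ^ 2 - 1) / Real.sqrt (Dd x y) ∧
    Real.sin (_root_.Gamma x y) = (-2 * x) / Real.sqrt (Dd x y) := by
  have hD : 0 < Dd x y := Dd_pos hy h
  have hsD : 0 < Real.sqrt (Dd x y) := Real.sqrt_pos.mpr hD
  unfold _root_.Gamma
  split_ifs with h1 h2 h3 h4 h5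
  · -- x = 0, 1 < y
    obtain ⟨hx0, hy1⟩ := h1
    subst hx0
    have hD' : Dd 0 y = (y ^ 2 - 1) ^ 2 := by simp only [Dd]; ring
    have hs : Real.sqrt (Dd 0 y) = y ^ 2 - 1 := by
      rw [hD', Real.sqrt_sq (by nlinarith)]
    rw [hs]
    have h2 : y ^ 2 - 1 > 0 := by nlinarith
    constructor
    · rw [Real.cos_zero]; field_simp; ring
    · simp
  · -- x = 0, y < 1
    obtain ⟨hx0, hy1⟩ := h2
    subst hx0
    have hD' : Dd 0 y = (y ^ 2 - 1) ^ 2 := by simp only [Dd]; ring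
    have hlt : y ^ 2 - 1 < 0 := by nlinarith
    have hne : 1 - y ^ 2 ≠ 0 := by intro h0; nlinarith
    have hs : Real.sqrt (Dd 0 y) = 1 - y ^ 2 := by
      rw [hD', show (y^2-1)^2 = (1-y^2)^2 by ring, Real.sqrt_sq (by nlinarith)]
    rw [hs]
    constructor
    · rw [Real.cos_pi]; field_simp; ring
    · simp
  · -- circle, x > 0
    obtain ⟨hc, hx⟩ := h3
    have hx0 : (2 : ℝ) * x ≠ 0 := by positivity
    have hs : Real.sqrt (Dd x y) = 2 * x := by
      rw [show Dd x y = (2*x)^2 by simp only [Dd]; rw [hc]; ring, Real.sqrt_sq (by linarith)]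
    rw [hs, hc]
    constructor
    · rw [show (3:ℝ) * π / 2 = π + π/2 by ring, Real.cos_add, Real.cos_pi_div_two,
        Real.sin_pi]
      simp
    · rw [show (3:ℝ) * π / 2 = π + π/2 by ring, Real.sin_add, Real.sin_pi_div_two,
        Real.sin_pi, Real.cos_pi]
      field_simp; simp
  · -- circle, x < 0
    obtain ⟨hc, hx⟩ := h4
    have hx0 : (-2 : ℝ) * x ≠ 0 := by nlinarith
    have hs : Real.sqrt (Dd x y) = -2 * x := by
      rw [show Dd x y = (-2*x)^2 by simp only [Dd]; rw [hc]; ring, Real.sqrt_sq (by linarith)]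
    rw [hs, hc]
    constructor
    · rw [Real.cos_pi_div_two]; simp
    · rw [Real.sin_pi_div_two, div_self hx0]
  · -- inside
    have ha : x ^ 2 + y ^ 2 - 1 < 0 := by linarith
    have ha' : x ^ 2 + y ^ 2 - 1 ≠ 0 := ne_of_lt ha
    set t := 2 * x / (x ^ 2 + y ^ 2 - 1) with ht
    have hst : (0:ℝ) < Real.sqrt (1 + t ^ 2) := Real.sqrt_pos.mpr (by positivity)
    have hs : Real.sqrt (1 + t ^ 2) * (1 - (x ^ 2 + y ^ 2)) = Real.sqrt (Dd x y) := by
      rw [← Real.sqrt_sq (show (0:ℝ) ≤ 1 - (x^2+y^2) by linarith),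
        ← Real.sqrt_mul (by positivity)]
      congr 1
      rw [ht]; simp only [Dd]; field_simp; ring
    have hu : (0:ℝ) < 1 - (x ^ 2 + y ^ 2) := by linarith
    have htt : t * (x ^ 2 + y ^ 2 - 1) = 2 * x := by rw [ht]; field_simp
    clear_value t
    constructor
    · rw [Real.cos_pi_sub, Real.cos_arctan, ← hs]
      field_simp
      linarith
    · rw [Real.sin_pi_sub, Real.sin_arctan, ← hs]
      rw [div_eq_div_iff hst.ne' (by positivity)]
      nlinarith [htt]
  · -- outside
    have ha : x ^ 2 + y ^ 2 - 1 > 0 := by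
      rcases lt_or_eq_of_le (not_lt.mp h5) with h' | h'
      · linarith
      · exfalso
        rcases lt_trichotomy x 0 with hx | hx | hx
        · exact h4 ⟨h'.symm, hx⟩
        · subst hx
          have : y = 1 := by nlinarith
          exact h ⟨rfl, this⟩
        · exact h3 ⟨h'.symm, hx⟩
    have ha' : x ^ 2 + y ^ 2 - 1 ≠ 0 := ne_of_gt ha
    set t := 2 * x / (x ^ 2 + y ^ 2 - 1) with ht
    have hst : (0:ℝ) < Real.sqrt (1 + t ^ 2) := Real.sqrt_pos.mpr (by positivity)
    have hs : Real.sqrt (1 + t ^ 2) * (x ^ 2 + y ^ 2 - 1) = Real.sqrt (Dd x y) := by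
      rw [← Real.sqrt_sq (show (0:ℝ) ≤ x^2+y^2-1 by linarith),
        ← Real.sqrt_mul (by positivity)]
      congr 1
      rw [ht]; simp only [Dd]; field_simp; ring
    have htt : t * (x ^ 2 + y ^ 2 - 1) = 2 * x := by rw [ht]; field_simp
    clear_value t
    constructor
    · rw [Real.cos_neg, Real.cos_arctan, ← hs]
      field_simp
    · rw [Real.sin_neg, Real.sin_arctan, ← hs]
      rw [show -(t / Real.sqrt (1 + t ^ 2)) = (-t) / Real.sqrt (1 + t ^ 2) from
        (neg_div _ _).symm]
      rw [div_eq_div_iff hst.ne' (by positivity)]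
      nlinarith [htt]

lemma not_and_of_ne {x y : ℝ} (h : ((x, y) : ℝ × ℝ) ≠ (0, 1)) : ¬(x = 0 ∧ y = 1) := by
  intro hc; exact h (by simp [hc.1, hc.2])

lemma hDdC : ContDiff ℝ ⊤ (fun q : ℝ × ℝ => Dd q.1 q.2) := by
  simp only [Dd]
  exact (contDiff_const.mul (contDiff_fst.pow 2)).add
    ((((contDiff_fst.pow 2).add (contDiff_snd.pow 2)).sub contDiff_const).pow 2)

/-- The function `Γ : ℍ \ {i} → ℝ/2πℤ` is continuously differentiable (formally: the
circle-valued map `exp(i·Γ)` is `C¹` on `ℍ \ {i}`); on the open regions `{x²+y²<1}` and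
`{x²+y²>1}` its partial derivatives are `∂Γ/∂x = 2(x²-y²+1)/(4x²+(x²+y²-1)²)` and
`∂Γ/∂y = 4xy/(4x²+(x²+y²-1)²)`, and these expressions extend continuously to `ℍ \ {i}`. -/
theorem Gamma_contDiff :
    ContDiffOn ℝ 1 (fun p : ℝ × ℝ => Complex.exp ((Gamma p.1 p.2 : ℂ) * Complex.I))
      {p : ℝ × ℝ | 0 < p.2 ∧ p ≠ (0, 1)} ∧
    (∀ x y : ℝ, 0 < y → x ^ 2 + y ^ 2 ≠ 1 →
      HasDerivAt (fun t => Gamma t y)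
        (2 * (x ^ 2 - y ^ 2 + 1) / (4 * x ^ 2 + (x ^ 2 + y ^ 2 - 1) ^ 2)) x ∧
      HasDerivAt (fun t => Gamma x t)
        (4 * x * y / (4 * x ^ 2 + (x ^ 2 + y ^ 2 - 1) ^ 2)) y) ∧
    ContinuousOn
      (fun p : ℝ × ℝ => 2 * (p.1 ^ 2 - p.2 ^ 2 + 1) / (4 * p.1 ^ 2 + (p.1 ^ 2 + p.2 ^ 2 - 1) ^ 2))
      {p : ℝ × ℝ | 0 < p.2 ∧ p ≠ (0, 1)} ∧
    ContinuousOn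
      (fun p : ℝ × ℝ => 4 * p.1 * p.2 / (4 * p.1 ^ 2 + (p.1 ^ 2 + p.2 ^ 2 - 1) ^ 2))
      {p : ℝ × ℝ | 0 < p.2 ∧ p ≠ (0, 1)} := by
  set S : Set (ℝ × ℝ) := {p : ℝ × ℝ | 0 < p.2 ∧ p ≠ (0, 1)} with hS
  have hDne : ∀ p ∈ S, (4 * p.1 ^ 2 + (p.1 ^ 2 + p.2 ^ 2 - 1) ^ 2) ≠ 0 := by
    intro p hp
    exact ne_of_gt (Dd_pos hp.1 (not_and_of_ne (by exact_mod_cast hp.2)))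
  refine ⟨?_, ?_, ?_, ?_⟩
  · -- C¹ of exp(iΓ)
    have hsqrt : ∀ p ∈ S, ContDiffAt ℝ 1 (fun q : ℝ × ℝ => Real.sqrt (Dd q.1 q.2)) p := by
      intro p hp
      exact (Real.contDiffAt_sqrt (ne_of_gt (Dd_pos hp.1
        (not_and_of_ne hp.2)))).comp p (hDdC.contDiffAt.of_le le_top)
    have h1 : ContDiffOn ℝ 1
        (fun p : ℝ × ℝ => (p.1 ^ 2 + p.2 ^ 2 - 1) / Real.sqrt (Dd p.1 p.2)) S := by
      intro p hp
      refine (ContDiffAt.div ?_ (hsqrt p hp) ?_).contDiffWithinAt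
      · exact (((contDiff_fst.pow 2).add (contDiff_snd.pow 2)).sub contDiff_const).contDiffAt
      · exact ne_of_gt (Real.sqrt_pos.mpr (Dd_pos hp.1 (not_and_of_ne hp.2)))
    have h2 : ContDiffOn ℝ 1
        (fun p : ℝ × ℝ => (-2 * p.1) / Real.sqrt (Dd p.1 p.2)) S := by
      intro p hp
      refine (ContDiffAt.div ?_ (hsqrt p hp) ?_).contDiffWithinAt
      · exact (contDiff_const.mul contDiff_fst).contDiffAt
      · exact ne_of_gt (Real.sqrt_pos.mpr (Dd_pos hp.1 (not_and_of_ne hp.2)))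
    have hF : ContDiffOn ℝ 1 (fun p : ℝ × ℝ =>
        (((p.1 ^ 2 + p.2 ^ 2 - 1) / Real.sqrt (Dd p.1 p.2) : ℝ) : ℂ) +
        (((-2 * p.1) / Real.sqrt (Dd p.1 p.2) : ℝ) : ℂ) * Complex.I) S := by
      exact (Complex.ofRealCLM.contDiff.comp_contDiffOn h1).add
        ((Complex.ofRealCLM.contDiff.comp_contDiffOn h2).mul contDiffOn_const)
    refine hF.congr ?_
    intro p hp
    obtain ⟨hc, hs⟩ := cos_sin_Gamma hp.1 (not_and_of_ne hp.2)
    rw [Complex.exp_mul_I, ← Complex.ofReal_cos, ← Complex.ofReal_sin, hc, hs]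
  · -- derivatives
    intro x y hy hne
    have ha' : x ^ 2 + y ^ 2 - 1 ≠ 0 := fun h0 => hne (by linarith)
    have haa : (0:ℝ) < (x ^ 2 + y ^ 2 - 1) ^ 2 := by
      rcases ha'.lt_or_gt with h | h <;> nlinarith
    have hD : (0:ℝ) < 4 * x ^ 2 + (x ^ 2 + y ^ 2 - 1) ^ 2 := by nlinarith [sq_nonneg x]
    have h1t : (1:ℝ) + (2 * x / (x ^ 2 + y ^ 2 - 1)) ^ 2 ≠ 0 := by positivity
    rcases lt_or_gt_of_ne hne with hlt | hgt
    · -- inside disc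
      constructor
      · -- d/dx
        have hev : (fun t => _root_.Gamma t y) =ᶠ[nhds x]
            (fun t => π - Real.arctan (2 * t / (t ^ 2 + y ^ 2 - 1))) := by
          have hopen : IsOpen {t : ℝ | t ^ 2 + y ^ 2 < 1} :=
            isOpen_lt (by fun_prop) continuous_const
          filter_upwards [hopen.mem_nhds (by simpa using hlt)] with t htm
          unfold _root_.Gamma
          split_ifs with h1 h2 h3 h4 h5
          · exfalso; nlinarith [h1.2, hy, sq_nonneg t]
          · simp [h2.1]
          · exfalso; linarith [h3.1]
          · exfalso; linarith [h4.1]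
          · rfl
        have hg : HasDerivAt (fun t => 2 * t / (t ^ 2 + y ^ 2 - 1))
            ((2 * (x ^ 2 + y ^ 2 - 1) - 2 * x * (2 * x)) / (x ^ 2 + y ^ 2 - 1) ^ 2) x := by
          have := ((hasDerivAt_id x).const_mul 2).div
            (((hasDerivAt_pow 2 x).add_const (y ^ 2)).sub_const 1) ha'
          refine this.congr_deriv ?_
          norm_num [id]
        have Hd := ((Real.hasDerivAt_arctan (2 * x / (x ^ 2 + y ^ 2 - 1))).comp x hg).const_sub π
        have heq : -(1 / (1 + (2 * x / (x ^ 2 + y ^ 2 - 1)) ^ 2) *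
            ((2 * (x ^ 2 + y ^ 2 - 1) - 2 * x * (2 * x)) / (x ^ 2 + y ^ 2 - 1) ^ 2)) =
            2 * (x ^ 2 - y ^ 2 + 1) / (4 * x ^ 2 + (x ^ 2 + y ^ 2 - 1) ^ 2) := by
          field_simp
          ring
        exact (heq ▸ Hd).congr_of_eventuallyEq hev
      · -- d/dy
        have hev : (fun t => _root_.Gamma x t) =ᶠ[nhds y]
            (fun t => π - Real.arctan (2 * x / (x ^ 2 + t ^ 2 - 1))) := by
          have hopen : IsOpen {t : ℝ | x ^ 2 + t ^ 2 < 1} :=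
            isOpen_lt (by fun_prop) continuous_const
          filter_upwards [hopen.mem_nhds (by simpa using hlt)] with t htm
          unfold _root_.Gamma
          split_ifs with h1 h2 h3 h4 h5
          · exfalso; nlinarith [h1.2, sq_nonneg x]
          · simp [h2.1]
          · exfalso; linarith [h3.1]
          · exfalso; linarith [h4.1]
          · rfl
        have hg : HasDerivAt (fun t => 2 * x / (x ^ 2 + t ^ 2 - 1))
            ((0 * (x ^ 2 + y ^ 2 - 1) - 2 * x * (2 * y)) / (x ^ 2 + y ^ 2 - 1) ^ 2) y := by
          have := (hasDerivAt_const y (2 * x)).div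
            (((hasDerivAt_pow 2 y).const_add (x ^ 2)).sub_const 1) ha'
          refine this.congr_deriv ?_
          norm_num
        have Hd := ((Real.hasDerivAt_arctan (2 * x / (x ^ 2 + y ^ 2 - 1))).comp y hg).const_sub π
        have heq : -(1 / (1 + (2 * x / (x ^ 2 + y ^ 2 - 1)) ^ 2) *
            ((0 * (x ^ 2 + y ^ 2 - 1) - 2 * x * (2 * y)) / (x ^ 2 + y ^ 2 - 1) ^ 2)) =
            4 * x * y / (4 * x ^ 2 + (x ^ 2 + y ^ 2 - 1) ^ 2) := by
          field_simp
          ring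
        exact (heq ▸ Hd).congr_of_eventuallyEq hev
    · -- outside disc
      constructor
      · -- d/dx
        have hev : (fun t => _root_.Gamma t y) =ᶠ[nhds x]
            (fun t => -Real.arctan (2 * t / (t ^ 2 + y ^ 2 - 1))) := by
          have hopen : IsOpen {t : ℝ | 1 < t ^ 2 + y ^ 2} :=
            isOpen_lt continuous_const (by fun_prop)
          filter_upwards [hopen.mem_nhds (by simpa using hgt)] with t htm
          unfold _root_.Gamma
          split_ifs with h1 h2 h3 h4 h5
          · simp [h1.1]
          · exfalso; nlinarith [h2.1, h2.2, hy]
          · exfalso; linarith [h3.1]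
          · exfalso; linarith [h4.1]
          · exfalso; linarith
          · rfl
        have hg : HasDerivAt (fun t => 2 * t / (t ^ 2 + y ^ 2 - 1))
            ((2 * (x ^ 2 + y ^ 2 - 1) - 2 * x * (2 * x)) / (x ^ 2 + y ^ 2 - 1) ^ 2) x := by
          have := ((hasDerivAt_id x).const_mul 2).div
            (((hasDerivAt_pow 2 x).add_const (y ^ 2)).sub_const 1) ha'
          refine this.congr_deriv ?_
          norm_num [id]
        have Hd := ((Real.hasDerivAt_arctan (2 * x / (x ^ 2 + y ^ 2 - 1))).comp x hg).neg
        have heq : -(1 / (1 + (2 * x / (x ^ 2 + y ^ 2 - 1)) ^ 2) *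
            ((2 * (x ^ 2 + y ^ 2 - 1) - 2 * x * (2 * x)) / (x ^ 2 + y ^ 2 - 1) ^ 2)) =
            2 * (x ^ 2 - y ^ 2 + 1) / (4 * x ^ 2 + (x ^ 2 + y ^ 2 - 1) ^ 2) := by
          field_simp
          ring
        exact (heq ▸ Hd).congr_of_eventuallyEq hev
      · -- d/dy
        have hev : (fun t => _root_.Gamma x t) =ᶠ[nhds y]
            (fun t => -Real.arctan (2 * x / (x ^ 2 + t ^ 2 - 1))) := by
          have hopen : IsOpen {t : ℝ | 1 < x ^ 2 + t ^ 2 ∧ 0 < t} :=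
            IsOpen.and (isOpen_lt continuous_const (by fun_prop))
              (isOpen_lt continuous_const continuous_id)
          filter_upwards [hopen.mem_nhds ⟨by simpa using hgt, hy⟩] with t htm
          obtain ⟨htm, htp⟩ := htm
          unfold _root_.Gamma
          split_ifs with h1 h2 h3 h4 h5
          · simp [h1.1]
          · exfalso; nlinarith [h2.1, h2.2]
          · exfalso; linarith [h3.1]
          · exfalso; linarith [h4.1]
          · exfalso; linarith
          · rfl
        have hg : HasDerivAt (fun t => 2 * x / (x ^ 2 + t ^ 2 - 1))
            ((0 * (x ^ 2 + y ^ 2 - 1) - 2 * x * (2 * y)) / (x ^ 2 + y ^ 2 - 1) ^ 2) y := by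
          have := (hasDerivAt_const y (2 * x)).div
            (((hasDerivAt_pow 2 y).const_add (x ^ 2)).sub_const 1) ha'
          refine this.congr_deriv ?_
          norm_num
        have Hd := ((Real.hasDerivAt_arctan (2 * x / (x ^ 2 + y ^ 2 - 1))).comp y hg).neg
        have heq : -(1 / (1 + (2 * x / (x ^ 2 + y ^ 2 - 1)) ^ 2) *
            ((0 * (x ^ 2 + y ^ 2 - 1) - 2 * x * (2 * y)) / (x ^ 2 + y ^ 2 - 1) ^ 2)) =
            4 * x * y / (4 * x ^ 2 + (x ^ 2 + y ^ 2 - 1) ^ 2) := by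
          field_simp
          ring
        exact (heq ▸ Hd).congr_of_eventuallyEq hev
  · -- ContinuousOn ∂x
    exact ContinuousOn.div
      (Continuous.continuousOn (by fun_prop)) (Continuous.continuousOn (by fun_prop)) hDne
  · exact ContinuousOn.div
      (Continuous.continuousOn (by fun_prop)) (Continuous.continuousOn (by fun_prop)) hDne
end
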